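/- One-state-adding Abraham–Moses transformation of the seed itself: if φ is twice differentiable on (x1,x2) with −φ'' + Uφ = Ẽφ, and Φ = φ/(1+⟨φ,φ⟩) with ⟨φ,φ⟩(x) = ∫_{x1}^x φ², then Φ satisfies −Φ'' + U^{(1)}Φ = ẼΦ, where U^{(1)} = U − 2 (log(1+⟨φ,φ⟩))''. Equivalently, Φ'' = (U − Ẽ)Φ − 4φ'Φ² + 2φ²Φ³. -/

import Mathlib

open Set MeasureTheory intervalIntegral

theorem am_transformed_seed_schrodinger (x1 x2 : ℝ) (U φ φ' φ'' : ℝ → ℝ)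
    (Etil : ℝ)
    (hU : ContinuousOn U (Ioo x1 x2))
    (hφ1 : ∀ x ∈ Ioo x1 x2, HasDerivAt φ (φ' x) x)
    (hφ2 : ∀ x ∈ Ioo x1 x2, HasDerivAt φ' (φ'' x) x)
    (hφeq : ∀ x ∈ Ioo x1 x2, -φ'' x + U x * φ x = Etil * φ x)
    (hint : ∀ x ∈ Ioo x1 x2, IntegrableOn (fun y => φ y ^ 2) (Ioo x1 x)) :
    ∀ x ∈ Ioo x1 x2,
      deriv (deriv (fun y => φ y / (1 + ∫ t in x1..y, φ t ^ 2))) x =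
        (U x - Etil) * (φ x / (1 + ∫ t in x1..x, φ t ^ 2)) -
          4 * φ' x * (φ x / (1 + ∫ t in x1..x, φ t ^ 2)) ^ 2 +
          2 * φ x ^ 2 * (φ x / (1 + ∫ t in x1..x, φ t ^ 2)) ^ 3 := by
  intro x hx
  have hcont : ContinuousOn (fun y => φ y ^ 2) (Ioo x1 x2) := fun y hy =>
    ((hφ1 y hy).continuousAt.pow 2).continuousWithinAt
  have hIder : ∀ y ∈ Ioo x1 x2,
      HasDerivAt (fun z => 1 + ∫ t in x1..z, φ t ^ 2) (φ y ^ 2) y := by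
    intro y hy
    have hii : IntervalIntegrable (fun t => φ t ^ 2) volume x1 y := by
      rw [intervalIntegrable_iff_integrableOn_Ioo_of_le hy.1.le]
      exact hint y hy
    exact (intervalIntegral.integral_hasDerivAt_right hii
      (hcont.stronglyMeasurableAtFilter isOpen_Ioo y hy)
      ((hφ1 y hy).continuousAt.pow 2)).const_add 1
  have hIpos : ∀ y ∈ Ioo x1 x2, 0 < 1 + ∫ t in x1..y, φ t ^ 2 := by
    intro y hy
    have h0 : 0 ≤ ∫ t in x1..y, φ t ^ 2 :=
      intervalIntegral.integral_nonneg hy.1.le (fun t _ => sq_nonneg _)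
    linarith
  have hΦder : ∀ y ∈ Ioo x1 x2,
      HasDerivAt (fun z => φ z / (1 + ∫ t in x1..z, φ t ^ 2))
        (φ' y / (1 + ∫ t in x1..y, φ t ^ 2) -
          φ y ^ 3 / (1 + ∫ t in x1..y, φ t ^ 2) ^ 2) y := by
    intro y hy
    have h : HasDerivAt (fun z => φ z / (1 + ∫ t in x1..z, φ t ^ 2)) _ y :=
      (hφ1 y hy).div (hIder y hy) (ne_of_gt (hIpos y hy))
    convert h using 1
    have hne := ne_of_gt (hIpos y hy)
    field_simp
  have hmem : Ioo x1 x2 ∈ nhds x := isOpen_Ioo.mem_nhds hx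
  have hev : deriv (fun y => φ y / (1 + ∫ t in x1..y, φ t ^ 2)) =ᶠ[nhds x]
      fun y => φ' y / (1 + ∫ t in x1..y, φ t ^ 2) -
        φ y ^ 3 / (1 + ∫ t in x1..y, φ t ^ 2) ^ 2 := by
    filter_upwards [hmem] with y hy
    exact (hΦder y hy).deriv
  rw [hev.deriv_eq]
  have hpos := hIpos x hx
  have hne : (1 + ∫ t in x1..x, φ t ^ 2) ≠ 0 := ne_of_gt hpos
  have hd1 : HasDerivAt (fun z => φ' z / (1 + ∫ t in x1..z, φ t ^ 2))
      (φ'' x / (1 + ∫ t in x1..x, φ t ^ 2) -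
        φ' x * φ x ^ 2 / (1 + ∫ t in x1..x, φ t ^ 2) ^ 2) x := by
    have h : HasDerivAt (fun z => φ' z / (1 + ∫ t in x1..z, φ t ^ 2)) _ x := (hφ2 x hx).div (hIder x hx) hne
    convert h using 1
    field_simp
  have hd2 : HasDerivAt (fun z => φ z ^ 3 / (1 + ∫ t in x1..z, φ t ^ 2) ^ 2)
      (3 * φ x ^ 2 * φ' x / (1 + ∫ t in x1..x, φ t ^ 2) ^ 2 -
        2 * φ x ^ 5 / (1 + ∫ t in x1..x, φ t ^ 2) ^ 3) x := by
    have hnum : HasDerivAt (fun z => φ z ^ 3) (3 * φ x ^ 2 * φ' x) x := by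
      have h : HasDerivAt (fun z => φ z ^ 3) _ x := (hφ1 x hx).pow 3
      convert h using 1 <;> push_cast <;> ring
    have hden : HasDerivAt (fun z => (1 + ∫ t in x1..z, φ t ^ 2) ^ 2)
        (2 * (1 + ∫ t in x1..x, φ t ^ 2) * φ x ^ 2) x := by
      have h : HasDerivAt (fun z => (1 + ∫ t in x1..z, φ t ^ 2) ^ 2) _ x := (hIder x hx).pow 2
      convert h using 1
      ring
    have hne2 : ((1 + ∫ t in x1..x, φ t ^ 2) ^ 2) ≠ 0 := pow_ne_zero _ hne
    have h : HasDerivAt (fun z => φ z ^ 3 / (1 + ∫ t in x1..z, φ t ^ 2) ^ 2) _ x := hnum.div hden hne2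
    convert h using 1
    field_simp
  rw [HasDerivAt.deriv (f := fun z => φ' z / (1 + ∫ t in x1..z, φ t ^ 2) - φ z ^ 3 / (1 + ∫ t in x1..z, φ t ^ 2) ^ 2) (hd1.sub hd2)]
  have hφ''x : φ'' x = (U x - Etil) * φ x := by
    have h := hφeq x hx
    nlinarith [h]
  rw [hφ''x]
  field_simp
  ring
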